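/- Let $H$ be a $3$-partite $3$-graph with sides $V_1, V_2, V_3$, where $|V_1| = n$ and $|V_2| \ge 2n - 1$. Suppose that every pair in $V_1 \times V_2$ has degree exactly $1$ in $H$ and every pair in $V_1 \times V_3$ has degree at most $1$ in $H$. Then $H$ has a matching of size $n$. -/

import Mathlib

theorem stmt_12 {V1 V2 V3 : Type*} [Fintype V1] [Fintype V2] [Fintype V3]
    [DecidableEq V1] [DecidableEq V2] [DecidableEq V3]
    (n : ℕ)
    (hV1 : Fintype.card V1 = n) (hV2 : 2 * n - 1 ≤ Fintype.card V2)
    (E : Finset (V1 × V2 × V3))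
    -- every pair in V1 × V2 has degree exactly 1
    (h12 : ∀ u : V1, ∀ v : V2,
      (E.filter (fun e => e.1 = u ∧ e.2.1 = v)).card = 1)
    -- every pair in V1 × V3 has degree at most 1
    (h13 : ∀ u : V1, ∀ w : V3,
      (E.filter (fun e => e.1 = u ∧ e.2.2 = w)).card ≤ 1) :
    -- H has a matching of size n
    ∃ M : Finset (V1 × V2 × V3), M ⊆ E ∧ M.card = n ∧
      ∀ e ∈ M, ∀ f ∈ M, e ≠ f →
        e.1 ≠ f.1 ∧ e.2.1 ≠ f.2.1 ∧ e.2.2 ≠ f.2.2 := by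
  classical
  have hex : ∀ u v, ∃ e, E.filter (fun e => e.1 = u ∧ e.2.1 = v) = {e} := by
    intro u v; exact Finset.card_eq_one.mp (h12 u v)
  choose g hg using hex
  have hmem : ∀ u v, g u v ∈ E.filter (fun e => e.1 = u ∧ e.2.1 = v) := by
    intro u v; rw [hg u v]; exact Finset.mem_singleton_self _
  have hgE : ∀ u v, g u v ∈ E := fun u v => (Finset.mem_filter.mp (hmem u v)).1
  have hg1 : ∀ u v, (g u v).1 = u := fun u v => (Finset.mem_filter.mp (hmem u v)).2.1
  have hg2 : ∀ u v, (g u v).2.1 = v := fun u v => (Finset.mem_filter.mp (hmem u v)).2.2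
  have hinj : ∀ u v v', (g u v).2.2 = (g u v').2.2 → v = v' := by
    intro u v v' h
    have m1 : g u v ∈ E.filter (fun e => e.1 = u ∧ e.2.2 = (g u v).2.2) := by
      simp [Finset.mem_filter, hgE, hg1]
    have m2 : g u v' ∈ E.filter (fun e => e.1 = u ∧ e.2.2 = (g u v).2.2) := by
      simp [Finset.mem_filter, hgE, hg1, h.symm]
    have heq := Finset.card_le_one.mp (h13 u (g u v).2.2) _ m1 _ m2
    rw [← hg2 u v, ← hg2 u v', heq]
  have key : ∀ S : Finset V1, 2 * S.card ≤ Fintype.card V2 + 1 →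
      ∃ M : Finset (V1 × V2 × V3), M ⊆ E ∧ M.card = S.card ∧
        (∀ e ∈ M, e.1 ∈ S) ∧
        ∀ e ∈ M, ∀ f ∈ M, e ≠ f → e.1 ≠ f.1 ∧ e.2.1 ≠ f.2.1 ∧ e.2.2 ≠ f.2.2 := by
    intro S
    induction S using Finset.induction_on with
    | empty => intro _; exact ⟨∅, by simp⟩
    | insert _ _ ha =>
      rename_i a S' ih
      intro hcard
      rw [Finset.card_insert_of_notMem ha] at hcard
      obtain ⟨M', hME, hMc, hM1, hMd⟩ := ih (by omega)
      -- forbidden set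
      set B : Finset V2 := M'.image (fun e => e.2.1) ∪
        Finset.univ.filter (fun v => (g a v).2.2 ∈ M'.image (fun e => e.2.2)) with hB
      have hB2 : (Finset.univ.filter (fun v => (g a v).2.2 ∈ M'.image (fun e => e.2.2))).card
          ≤ M'.card := by
        calc _ ≤ (M'.image (fun e => e.2.2)).card := by
              apply Finset.card_le_card_of_injOn (fun v => (g a v).2.2)
              · intro v hv; exact (Finset.mem_filter.mp hv).2
              · intro v hv v' hv' h; exact hinj a v v' h
          _ ≤ M'.card := Finset.card_image_le
      have hBcard : B.card < Fintype.card V2 := by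
        calc B.card ≤ _ + _ := Finset.card_union_le _ _
          _ ≤ M'.card + M'.card := Nat.add_le_add Finset.card_image_le hB2
          _ < Fintype.card V2 := by omega
      have : ∃ v : V2, v ∉ B := by
        by_contra h
        push_neg at h
        have : Finset.univ ⊆ B := fun v _ => h v
        have := Finset.card_le_card this
        rw [Finset.card_univ] at this
        omega
      obtain ⟨v, hv⟩ := this
      have hv1 : v ∉ M'.image (fun e => e.2.1) := fun h => hv (Finset.mem_union_left _ h)
      have hv2 : (g a v).2.2 ∉ M'.image (fun e => e.2.2) := by
        intro h
        exact hv (Finset.mem_union_right _ (Finset.mem_filter.mpr ⟨Finset.mem_univ _, h⟩))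
      have hnew : g a v ∉ M' := by
        intro h
        exact ha (hg1 a v ▸ hM1 _ h)
      have hdis : ∀ e ∈ M', (g a v).1 ≠ e.1 ∧ (g a v).2.1 ≠ e.2.1 ∧ (g a v).2.2 ≠ e.2.2 := by
        intro e he
        refine ⟨?_, ?_, ?_⟩
        · rw [hg1]; intro h; exact ha (h ▸ hM1 _ he)
        · rw [hg2]; intro h; exact hv1 (Finset.mem_image.mpr ⟨e, he, h.symm⟩)
        · intro h; exact hv2 (Finset.mem_image.mpr ⟨e, he, h.symm⟩)
      refine ⟨insert (g a v) M', ?_, ?_, ?_, ?_⟩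
      · intro e he
        rcases Finset.mem_insert.mp he with h | h
        · exact h ▸ hgE a v
        · exact hME h
      · rw [Finset.card_insert_of_notMem hnew, Finset.card_insert_of_notMem ha, hMc]
      · intro e he
        rcases Finset.mem_insert.mp he with h | h
        · rw [h, hg1]; exact Finset.mem_insert_self _ _
        · exact Finset.mem_insert_of_mem (hM1 _ h)
      · intro e he f hf hne
        rcases Finset.mem_insert.mp he with h | h <;> rcases Finset.mem_insert.mp hf with h' | h'
        · exact absurd (h.trans h'.symm) hne
        · exact h ▸ hdis f h'
        · have := hdis e h
          subst h'
          exact ⟨(this.1).symm, (this.2.1).symm, (this.2.2).symm⟩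
        · exact hMd e h f h' hne
  obtain ⟨M, hME, hMc, _, hMd⟩ := key Finset.univ (by rw [Finset.card_univ, hV1]; omega)
  exact ⟨M, hME, by rw [hMc, Finset.card_univ, hV1], hMd⟩
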